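/- For natural numbers c and f ≥ 1, the coefficient of z^c x^i in the Taylor expansion of x^f/((1−z)(1−xz)^f) equals C(i−1, f−1) for f ≤ i ≤ c+f and 0 otherwise. -/

import Mathlib

open MvPowerSeries Finsupp

noncomputable def Tser (f : ℕ) : MvPowerSeries (Fin 2) ℚ :=
  fun d => if d 0 ≤ d 1 then ((d 0 + f - 1).choose (f - 1) : ℚ) else 0

noncomputable def Vser : MvPowerSeries (Fin 2) ℚ :=
  fun d => if d 0 = 0 then (1 : ℚ) else 0

lemma coeff_Tser (f : ℕ) (d : Fin 2 →₀ ℕ) :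
    MvPowerSeries.coeff d (Tser f) =
      if d 0 ≤ d 1 then ((d 0 + f - 1).choose (f - 1) : ℚ) else 0 := rfl

lemma coeff_Vser (d : Fin 2 →₀ ℕ) :
    MvPowerSeries.coeff d Vser = if d 0 = 0 then (1 : ℚ) else 0 := rfl

lemma le_single_add (a b : ℕ) (d : Fin 2 →₀ ℕ) :
    single (0 : Fin 2) a + single (1 : Fin 2) b ≤ d ↔ a ≤ d 0 ∧ b ≤ d 1 := by
  simp [Finsupp.le_def, Fin.forall_fin_two]

lemma sub_apply0 (a b : ℕ) (d : Fin 2 →₀ ℕ) :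
    (d - (single (0 : Fin 2) a + single (1 : Fin 2) b)) 0 = d 0 - a := by
  simp [Finsupp.tsub_apply]

lemma sub_apply1 (a b : ℕ) (d : Fin 2 →₀ ℕ) :
    (d - (single (0 : Fin 2) a + single (1 : Fin 2) b)) 1 = d 1 - b := by
  simp [Finsupp.tsub_apply]

lemma hxz : (X 0 * X 1 : MvPowerSeries (Fin 2) ℚ) =
    monomial (single (0 : Fin 2) 1 + single (1 : Fin 2) 1) 1 := by
  rw [X_def, X_def, monomial_mul_monomial, one_mul]

lemma hz : (X 1 : MvPowerSeries (Fin 2) ℚ) =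
    monomial (single (0 : Fin 2) 0 + single (1 : Fin 2) 1) 1 := by
  rw [X_def, Finsupp.single_zero, zero_add]

lemma step (f : ℕ) (hf : 1 ≤ f) :
    Tser (f + 1) * (1 - X 0 * X 1) = Tser f := by
  ext d
  rw [mul_sub, mul_one, map_sub, hxz, coeff_mul_monomial]
  simp only [coeff_Tser, le_single_add, sub_apply0, sub_apply1, mul_one]
  obtain ⟨f, rfl⟩ := Nat.exists_eq_add_of_le hf
  rcases Nat.eq_zero_or_pos (d 0) with h0 | h0
  · rcases Nat.eq_zero_or_pos (d 1) with h1 | h1 <;> simp [h0, h1]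
  · rcases Nat.eq_zero_or_pos (d 1) with h1 | h1
    · rw [if_neg (by omega), if_neg (by omega), if_neg (by omega)]; ring
    · obtain ⟨i, hi⟩ : ∃ i, d 0 = i + 1 := ⟨d 0 - 1, by omega⟩
      obtain ⟨c, hc⟩ : ∃ c, d 1 = c + 1 := ⟨d 1 - 1, by omega⟩
      simp only [hi, hc]
      rcases le_or_gt (i + 1) (c + 1) with h | h
      · rw [if_pos h, if_pos ⟨by omega, by omega⟩, if_pos (by omega), if_pos (by omega)]
        have key : (i + 1 + (1 + f + 1) - 1).choose (1 + f + 1 - 1) =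
            (i + 1 - 1 + (1 + f + 1) - 1).choose (1 + f + 1 - 1) +
              (i + 1 + (1 + f) - 1).choose (1 + f - 1) := by
          have e1 : i + 1 + (1 + f + 1) - 1 = (i + f + 1) + 1 := by omega
          have e2 : 1 + f + 1 - 1 = f + 1 := by omega
          have e3 : i + 1 - 1 + (1 + f + 1) - 1 = i + f + 1 := by omega
          have e4 : i + 1 + (1 + f) - 1 = i + f + 1 := by omega
          have e5 : 1 + f - 1 = f := by omega
          rw [e1, e2, e3, e4, e5]
          exact (Nat.choose_succ_succ _ _).trans (Nat.add_comm _ _)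
        rw [key]
        push_cast
        ring
      · rw [if_neg (by omega), if_pos ⟨by omega, by omega⟩, if_neg (by omega),
          if_neg (by omega)]
        ring

lemma Tser_one_mul : Tser 1 * (1 - X 0 * X 1) = Vser := by
  ext d
  rw [mul_sub, mul_one, map_sub, hxz, coeff_mul_monomial]
  simp only [coeff_Tser, coeff_Vser, le_single_add, sub_apply0, sub_apply1, mul_one]
  rcases Nat.eq_zero_or_pos (d 0) with h0 | h0
  · rcases Nat.eq_zero_or_pos (d 1) with h1 | h1 <;> simp [h0, h1]
  · rcases Nat.eq_zero_or_pos (d 1) with h1 | h1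
    · rw [if_neg (by omega), if_neg (by omega), if_neg (by omega)]; ring
    · rcases le_or_gt (d 0) (d 1) with h | h
      · rw [if_pos h, if_pos ⟨by omega, by omega⟩, if_pos (by omega), if_neg (by omega)]
        simp
      · rw [if_neg (by omega), if_pos ⟨by omega, by omega⟩, if_neg (by omega),
          if_neg (by omega)]
        ring

lemma Vser_mul : Vser * (1 - X 1) = 1 := by
  ext d
  rw [mul_sub, mul_one, map_sub, hz, coeff_mul_monomial]
  simp only [coeff_Vser, le_single_add, sub_apply0, sub_apply1, mul_one,
    MvPowerSeries.coeff_one, Nat.zero_le, true_and, Nat.sub_zero]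
  have hd : (d = 0) ↔ (d 0 = 0 ∧ d 1 = 0) := by
    constructor
    · rintro rfl; simp
    · rintro ⟨h0, h1⟩; ext s; fin_cases s <;> simpa
  by_cases h0 : d 0 = 0 <;> by_cases h1 : d 1 = 0
  · rw [if_pos h0, if_neg (by omega), if_pos (hd.mpr ⟨h0, h1⟩)]
    norm_num
  · rw [if_pos h0, if_pos (by omega), if_neg (fun hh => h1 (hd.mp hh).2)]
    norm_num
  · rw [if_neg h0, if_neg (by omega), if_neg (fun hh => h0 (hd.mp hh).1)]
    norm_num
  · rw [if_neg h0, if_pos (by omega), if_neg (fun hh => h0 (hd.mp hh).1)]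
    norm_num

lemma Tser_mul (f : ℕ) (hf : 1 ≤ f) :
    Tser f * ((1 - X 1) * (1 - X 0 * X 1) ^ f) = 1 := by
  induction f with
  | zero => omega
  | succ f ih =>
    rcases Nat.eq_zero_or_pos f with rfl | hf'
    · have : Tser 1 * ((1 - X 1) * (1 - X 0 * X 1) ^ 1) =
          (Tser 1 * (1 - X 0 * X 1)) * (1 - X 1) := by ring
      rw [this, Tser_one_mul, Vser_mul]
    · calc Tser (f + 1) * ((1 - X 1) * (1 - X 0 * X 1) ^ (f + 1))
          = (Tser (f + 1) * (1 - X 0 * X 1)) * ((1 - X 1) * (1 - X 0 * X 1) ^ f) := by ring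
        _ = 1 := by rw [step f hf', ih hf']

theorem total_requests_gf (c f : ℕ) (hf : 1 ≤ f) (i : ℕ) :
    MvPowerSeries.coeff (Finsupp.single (0 : Fin 2) i + Finsupp.single (1 : Fin 2) c)
        ((X (0 : Fin 2)) ^ f *
          ((1 - X (1 : Fin 2)) * (1 - X (0 : Fin 2) * X (1 : Fin 2)) ^ f)⁻¹
          : MvPowerSeries (Fin 2) ℚ) =
      if f ≤ i ∧ i ≤ c + f then (Nat.choose (i - 1) (f - 1) : ℚ) else 0 := by
  have hc : constantCoeff ((1 - X 1) * (1 - X 0 * X 1) ^ f : MvPowerSeries (Fin 2) ℚ) ≠ 0 := by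
    simp
  rw [(MvPowerSeries.inv_eq_iff_mul_eq_one hc).mpr (Tser_mul f hf), X_pow_eq,
    coeff_monomial_mul]
  have hle : (single (0 : Fin 2) f ≤ single (0 : Fin 2) i + single (1 : Fin 2) c) ↔ f ≤ i := by
    simp [Finsupp.le_def, Fin.forall_fin_two]
  simp only [hle, coeff_Tser, one_mul]
  have e0 : (single (0 : Fin 2) i + single (1 : Fin 2) c - single (0 : Fin 2) f) 0 = i - f := by
    simp [Finsupp.tsub_apply]
  have e1 : (single (0 : Fin 2) i + single (1 : Fin 2) c - single (0 : Fin 2) f) 1 = c := by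
    simp [Finsupp.tsub_apply]
  simp only [e0, e1]
  by_cases h : f ≤ i
  · rw [if_pos h]
    have hn : i - f + f - 1 = i - 1 := by omega
    rw [hn]
    by_cases h2 : i - f ≤ c
    · rw [if_pos h2, if_pos ⟨h, by omega⟩]
    · rw [if_neg h2, if_neg (by omega)]
  · rw [if_neg h, if_neg (by omega)]
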